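/- Let m ≥ 1 be an integer and let (b⋆,d⋆) ∈ S*_m. Then the denominator −(2+m)/m + (m/(2+m)) d⋆ + (2(2+m)/m) b⋆ + (4(1+m)/(m(2+m)))(2 b⋆^{1+m/2} − 1) d⋆^{−m/2} − 2 t₀*(b⋆,m) appearing in W_*(b⋆,d⋆,m) is positive and equals ∫₀^∞ |g_{b⋆,d⋆,m}(t)| dt, and the Lebesgue measure of {t ∈ [0,∞) : |Λ_m^* g_{b⋆,d⋆,m}(t)| ≥ 1} is at least 1 − d⋆; consequently |{t ∈ [0,∞) : |Λ_m^* g_{b⋆,d⋆,m}(t)| ≥ 1}| ≥ W_*(b⋆,d⋆,m) · ∫₀^∞ |g_{b⋆,d⋆,m}(t)| dt. -/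

import Mathlib

open MeasureTheory Real Set

/-- The adjoint operator `Λ_m^*`. -/
noncomputable def LamStar (m : ℕ) (f : ℝ → ℝ) (t : ℝ) : ℝ :=
  (1 + (m : ℝ)) * t ^ ((m : ℝ) / 2) * (∫ s in Set.Ioi t, f s * s ^ (-1 - (m : ℝ) / 2)) - f t

/-- The coefficient `D_*(b⋆,m) = (2(1+m)/(2+m))(2 b⋆^{1+m/2} - 1)`. -/
noncomputable def DcoefStar (m : ℕ) (b : ℝ) : ℝ :=
  (2 * (1 + (m : ℝ)) / (2 + (m : ℝ))) * (2 * b ^ (1 + (m : ℝ) / 2) - 1)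

/-- The parameter set `S*_m` (first coordinate `b⋆`, second coordinate `d⋆`). -/
def SsetStar (m : ℕ) : Set (ℝ × ℝ) :=
  {p : ℝ × ℝ | 0 < p.2 ∧ p.2 < p.1 ∧ p.1 < 1 ∧ 0 < DcoefStar m p.1 ∧
    -(m : ℝ) / (2 + (m : ℝ)) + DcoefStar m p.1 * p.2 ^ (-1 - (m : ℝ) / 2) < 2 ∧
    0 < -(m : ℝ) / (2 + (m : ℝ)) + DcoefStar m p.1 * p.2 ^ (-1 - (m : ℝ) / 2) ∧
    -(m : ℝ) / (2 + (m : ℝ)) + DcoefStar m p.1 * p.1 ^ (-1 - (m : ℝ) / 2) < 0}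

/-- The function `g_{b⋆,d⋆,m}` from the class `F^sp*_m`. -/
noncomputable def gsp (m : ℕ) (b d t : ℝ) : ℝ :=
  if d < t ∧ t ≤ b then -(m : ℝ) / (2 + (m : ℝ)) + DcoefStar m b * t ^ (-1 - (m : ℝ) / 2)
  else if b < t ∧ t ≤ 1 then
    (m : ℝ) / (2 + (m : ℝ)) - (2 * (1 + (m : ℝ)) / (2 + (m : ℝ))) * t ^ (-1 - (m : ℝ) / 2)
  else 0

/-- `t₀*(b⋆,m)`. -/
noncomputable def t0Star (m : ℕ) (b : ℝ) : ℝ :=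
  (2 * (1 + (m : ℝ)) / (m : ℝ)) ^ (2 / (2 + (m : ℝ))) *
    (2 * b ^ (1 + (m : ℝ) / 2) - 1) ^ (2 / (2 + (m : ℝ)))

/-- The denominator of `W_*(b⋆,d⋆,m)`. -/
noncomputable def denomStar (m : ℕ) (b d : ℝ) : ℝ :=
  -(2 + (m : ℝ)) / (m : ℝ) + ((m : ℝ) / (2 + (m : ℝ))) * d + (2 * (2 + (m : ℝ)) / (m : ℝ)) * b
    + (4 * (1 + (m : ℝ)) / ((m : ℝ) * (2 + (m : ℝ)))) * (2 * b ^ (1 + (m : ℝ) / 2) - 1)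
      * d ^ (-(m : ℝ) / 2)
    - 2 * t0Star m b

/-- `W_*(b⋆,d⋆,m)`. -/
noncomputable def WfStar (m : ℕ) (b d : ℝ) : ℝ := (1 - d) / denomStar m b d

/-- The weak-type ratio of `g_{b⋆,d⋆,m}` under `Λ_m^*`. -/
noncomputable def ratioStar (m : ℕ) (b d : ℝ) : ℝ :=
  (MeasureTheory.volume {t : ℝ | 0 ≤ t ∧ 1 ≤ |LamStar m (gsp m b d) t|}).toReal /
    ∫ t in Set.Ici (0 : ℝ), |gsp m b d t|

/-- The restricted weak-type constant of `Λ_m^*` over the class `F^sp*_m`. -/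
noncomputable def RspStar (m : ℕ) : ℝ :=
  sSup {r : ℝ | ∃ b d : ℝ, (b, d) ∈ SsetStar m ∧ r = ratioStar m b d}

section Stmt5Aux

lemma bdd_integrableOn {f : ℝ → ℝ} (hf : Measurable f) {x y C : ℝ}
    (hC : ∀ s ∈ Ioc x y, |f s| ≤ C) : IntegrableOn f (Ioc x y) volume := by
  apply Measure.integrableOn_of_bounded (M := C) measure_Ioc_lt_top.ne hf.aestronglyMeasurable
  refine (ae_restrict_iff' measurableSet_Ioc).mpr (ae_of_all _ fun s hs => ?_)
  rw [Real.norm_eq_abs]; exact hC s hs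

lemma int_rpow_aux {x y : ℝ} (r : ℝ) (hx : 0 < x) (hxy : x ≤ y) (hr : r ≠ -1) :
    ∫ t in x..y, t ^ r = (y ^ (r + 1) - x ^ (r + 1)) / (r + 1) :=
  integral_rpow (Or.inr ⟨hr, by rw [Set.uIcc_of_le hxy]; exact fun h => hx.not_ge h.1⟩)

lemma intInt_rpow {x y : ℝ} (r : ℝ) (hx : 0 < x) (hxy : x ≤ y) :
    IntervalIntegrable (fun t => t ^ r) volume x y :=
  intervalIntegral.intervalIntegrable_rpow
    (Or.inr (by rw [Set.uIcc_of_le hxy]; exact fun h => hx.not_ge h.1))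

lemma int_affine {x y : ℝ} (A B r : ℝ) (hx : 0 < x) (hxy : x ≤ y) (hr : r ≠ -1) :
    ∫ t in x..y, (A + B * t ^ r)
      = A * (y - x) + B * ((y ^ (r + 1) - x ^ (r + 1)) / (r + 1)) := by
  rw [intervalIntegral.integral_add intervalIntegrable_const
      ((intInt_rpow r hx hxy).const_mul B),
    intervalIntegral.integral_const_mul, int_rpow_aux r hx hxy hr,
    intervalIntegral.integral_const, smul_eq_mul]
  ring

lemma int_two_rpow {x y : ℝ} (A B r1 r2 : ℝ) (hx : 0 < x) (hxy : x ≤ y)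
    (h1 : r1 ≠ -1) (h2 : r2 ≠ -1) :
    ∫ t in x..y, (A * t ^ r1 + B * t ^ r2)
      = A * ((y ^ (r1 + 1) - x ^ (r1 + 1)) / (r1 + 1))
        + B * ((y ^ (r2 + 1) - x ^ (r2 + 1)) / (r2 + 1)) := by
  rw [intervalIntegral.integral_add ((intInt_rpow r1 hx hxy).const_mul A)
      ((intInt_rpow r2 hx hxy).const_mul B),
    intervalIntegral.integral_const_mul, intervalIntegral.integral_const_mul,
    int_rpow_aux r1 hx hxy h1, int_rpow_aux r2 hx hxy h2]

lemma gsp_meas (m : ℕ) (b d : ℝ) : Measurable (gsp m b d) := by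
  unfold gsp
  refine Measurable.ite ?_ (by fun_prop) (Measurable.ite ?_ (by fun_prop) measurable_const)
  · exact measurableSet_Ioc
  · exact measurableSet_Ioc

lemma denom_alg (Mv T P Dd dd bb : ℝ) (hM : 0 < Mv) (h2M : 0 < 2 + Mv) (h1M : 0 < 1 + Mv)
    (hP : 0 < P) (hB : 0 < 2*P - 1) :
    -(2+Mv)/Mv + Mv/(2+Mv)*dd + 2*(2+Mv)/Mv*bb + 4*(1+Mv)/(Mv*(2+Mv))*(2*P-1)*Dd - 2*T
    = (-(Mv/(2+Mv)) * (T - dd)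
        + (2*(1+Mv)/(2+Mv)*(2*P-1)) * ((Mv/(2+Mv)/(2*(1+Mv)/(2+Mv)*(2*P-1)) * T - Dd) / (-(Mv/2))))
      + (Mv/(2+Mv)*(bb - T)
        + (-(2*(1+Mv)/(2+Mv)*(2*P-1))) * ((bb*P⁻¹ - Mv/(2+Mv)/(2*(1+Mv)/(2+Mv)*(2*P-1))*T)/(-(Mv/2))))
      + (-(Mv/(2+Mv))*(1-bb) + 2*(1+Mv)/(2+Mv) * ((1 - bb*P⁻¹)/(-(Mv/2)))) := by
  field_simp
  ring

lemma lam_alg2 (Mv X Y tt : ℝ) (hM : 0 < Mv) (h1M : 0 < 1+Mv) (h2M : 0 < 2+Mv)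
    (hrel : X * (tt * Y) = 1) :
    (1+Mv) * X * (Mv/(2+Mv) * ((1 - tt*Y)/(-1-Mv/2+1))
        + (-(2*(1+Mv)/(2+Mv))) * ((1 - tt*Y*Y)/(-1-Mv/2+(-1-Mv/2)+1)))
      - (Mv/(2+Mv) - 2*(1+Mv)/(2+Mv)*Y) = 1 := by
  have hX : X ≠ 0 := by
    intro h0; rw [h0, zero_mul] at hrel; exact one_ne_zero hrel.symm
  have h' : tt * Y = X⁻¹ := eq_inv_of_mul_eq_one_left (by linarith [hrel, mul_comm X (tt*Y)])
  rw [h',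
    show (-1-Mv/2+1 : ℝ) = -(Mv/2) by ring,
    show (-1-Mv/2+(-1-Mv/2)+1 : ℝ) = -(1+Mv) by ring]
  simp only [div_neg]
  field_simp [hX]
  ring

lemma lam_alg1 (Mv X Y tt bb Yb P : ℝ) (hM : 0 < Mv) (h1M : 0 < 1+Mv) (h2M : 0 < 2+Mv)
    (hrel : X * (tt * Y) = 1) (hrel2 : P * Yb = 1) :
    (1+Mv) * X * ((-(Mv/(2+Mv))) * ((bb*Yb - tt*Y)/(-1-Mv/2+1))
        + (2*(1+Mv)/(2+Mv)*(2*P-1)) * ((bb*Yb*Yb - tt*Y*Y)/(-1-Mv/2+(-1-Mv/2)+1))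
        + (Mv/(2+Mv) * ((1 - bb*Yb)/(-1-Mv/2+1))
          + (-(2*(1+Mv)/(2+Mv))) * ((1 - bb*Yb*Yb)/(-1-Mv/2+(-1-Mv/2)+1))))
      - (-(Mv/(2+Mv)) + 2*(1+Mv)/(2+Mv)*(2*P-1)*Y) = -1 := by
  have hX : X ≠ 0 := by
    intro h0; rw [h0, zero_mul] at hrel; exact one_ne_zero hrel.symm
  have hP' : P ≠ 0 := by
    intro h0; rw [h0, zero_mul] at hrel2; exact one_ne_zero hrel2.symm
  have h' : tt * Y = X⁻¹ := eq_inv_of_mul_eq_one_left (by linarith [hrel, mul_comm X (tt*Y)])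
  have h2 : Yb = P⁻¹ := eq_inv_of_mul_eq_one_left (by linarith [hrel2, mul_comm P Yb])
  rw [h', h2,
    show (-1-Mv/2+1 : ℝ) = -(Mv/2) by ring,
    show (-1-Mv/2+(-1-Mv/2)+1 : ℝ) = -(1+Mv) by ring]
  simp only [div_neg]
  field_simp [hX, hP']
  ring

lemma intervalIntegral_congr_Ioc {f g : ℝ → ℝ} {x y : ℝ} (hxy : x ≤ y)
    (h : EqOn f g (Ioc x y)) : ∫ t in x..y, f t = ∫ t in x..y, g t := by
  rw [intervalIntegral.integral_of_le hxy, intervalIntegral.integral_of_le hxy,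
    setIntegral_congr_fun measurableSet_Ioc h]

end Stmt5Aux

set_option maxHeartbeats 1000000 in
/-- For `(b⋆,d⋆) ∈ S*_m` the denominator of `W_*(b⋆,d⋆,m)` is positive and equals the
`L¹`-norm of `g_{b⋆,d⋆,m}`, the measure of `{|Λ_m^* g_{b⋆,d⋆,m}| ≥ 1}` is at least `1 - d⋆`,
and consequently it is at least `W_*(b⋆,d⋆,m)` times the `L¹`-norm of `g_{b⋆,d⋆,m}`. -/
theorem stmt_5 (m : ℕ) (hm : 1 ≤ m) (b d : ℝ) (h : (b, d) ∈ SsetStar m) :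
    0 < denomStar m b d ∧
    denomStar m b d = ∫ t in Set.Ici (0 : ℝ), |gsp m b d t| ∧
    ENNReal.ofReal (1 - d) ≤
      MeasureTheory.volume {t : ℝ | 0 ≤ t ∧ 1 ≤ |LamStar m (gsp m b d) t|} ∧
    ENNReal.ofReal (WfStar m b d * ∫ t in Set.Ici (0 : ℝ), |gsp m b d t|) ≤
      MeasureTheory.volume {t : ℝ | 0 ≤ t ∧ 1 ≤ |LamStar m (gsp m b d) t|} := by
  simp only [SsetStar, Set.mem_setOf_eq] at h
  obtain ⟨hd0, hdb, hb1, hD, hlt2, hposd, hnegb⟩ := h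
  have hb0 : (0:ℝ) < b := lt_trans hd0 hdb
  have hM1 : (1:ℝ) ≤ (m:ℝ) := by exact_mod_cast hm
  have hM0 : (0:ℝ) < (m:ℝ) := by linarith
  have h2M : (0:ℝ) < 2 + (m:ℝ) := by linarith
  have h1M : (0:ℝ) < 1 + (m:ℝ) := by linarith
  have hc0 : (0:ℝ) < (m:ℝ)/(2+(m:ℝ)) := by positivity
  have hK0 : (0:ℝ) < 2*(1+(m:ℝ))/(2+(m:ℝ)) := by positivity
  have hP0 : (0:ℝ) < b ^ (1+(m:ℝ)/2) := rpow_pos_of_pos hb0 _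
  have hDval : DcoefStar m b = (2*(1+(m:ℝ))/(2+(m:ℝ))) * (2*b^(1+(m:ℝ)/2)-1) := rfl
  have hBpos : (0:ℝ) < 2 * b ^ (1+(m:ℝ)/2) - 1 := by
    have h' := hD
    rw [hDval] at h'
    by_contra hcon
    push_neg at hcon
    have := mul_nonpos_of_nonneg_of_nonpos hK0.le hcon
    linarith
  have hβle : (-1-(m:ℝ)/2) ≤ 0 := by linarith
  have hβne : (-1-(m:ℝ)/2) ≠ -1 := fun hc => by
    have : (m:ℝ) = 0 := by linarith
    linarith
  have hβ2ne : ((-1-(m:ℝ)/2) + (-1-(m:ℝ)/2)) ≠ -1 := fun hc => by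
    have : (m:ℝ) = -1 := by linarith
    linarith
  -- t₀ facts
  set T := t0Star m b with hTdef
  have hT_eq : T = (DcoefStar m b / ((m:ℝ)/(2+(m:ℝ)))) ^ (2/(2+(m:ℝ))) := by
    rw [hTdef]
    unfold t0Star
    rw [show DcoefStar m b / ((m:ℝ)/(2+(m:ℝ)))
        = (2*(1+(m:ℝ))/(m:ℝ)) * (2*b^(1+(m:ℝ)/2)-1) by
      rw [hDval]; field_simp]
    rw [Real.mul_rpow (by positivity) hBpos.le]
  have hDc0 : (0:ℝ) < DcoefStar m b / ((m:ℝ)/(2+(m:ℝ))) := div_pos hD hc0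
  have hT0 : 0 < T := by rw [hT_eq]; positivity
  have hTβ : T ^ (-1-(m:ℝ)/2) = ((m:ℝ)/(2+(m:ℝ))) / DcoefStar m b := by
    rw [hT_eq, ← Real.rpow_mul hDc0.le,
      show (2/(2+(m:ℝ))) * (-1-(m:ℝ)/2) = -1 by field_simp; ring]
    rw [show ((-1 : ℝ)) = -(1:ℝ) from rfl, Real.rpow_neg hDc0.le, Real.rpow_one, inv_div]
  have hcd : (m:ℝ)/(2+(m:ℝ)) < DcoefStar m b * d ^ (-1-(m:ℝ)/2) := by
    have hnd : -(m:ℝ)/(2+(m:ℝ)) = -((m:ℝ)/(2+(m:ℝ))) := neg_div _ _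
    rw [hnd] at hposd
    linarith
  have hcb : DcoefStar m b * b ^ (-1-(m:ℝ)/2) < (m:ℝ)/(2+(m:ℝ)) := by
    have hnd : -(m:ℝ)/(2+(m:ℝ)) = -((m:ℝ)/(2+(m:ℝ))) := neg_div _ _
    rw [hnd] at hnegb
    linarith
  have hdT : d < T := by
    by_contra hcon
    push_neg at hcon
    have h1 : d ^ (-1-(m:ℝ)/2) ≤ T ^ (-1-(m:ℝ)/2) :=
      rpow_le_rpow_of_nonpos hT0 hcon hβle
    rw [hTβ] at h1
    have h2 : DcoefStar m b * d ^ (-1-(m:ℝ)/2)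
        ≤ DcoefStar m b * (((m:ℝ)/(2+(m:ℝ))) / DcoefStar m b) :=
      mul_le_mul_of_nonneg_left h1 hD.le
    rw [mul_div_cancel₀ _ hD.ne'] at h2
    linarith
  have hTb : T < b := by
    by_contra hcon
    push_neg at hcon
    have h1 : T ^ (-1-(m:ℝ)/2) ≤ b ^ (-1-(m:ℝ)/2) :=
      rpow_le_rpow_of_nonpos hb0 hcon hβle
    rw [hTβ] at h1
    have h2 : DcoefStar m b * (((m:ℝ)/(2+(m:ℝ))) / DcoefStar m b)
        ≤ DcoefStar m b * b ^ (-1-(m:ℝ)/2) :=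
      mul_le_mul_of_nonneg_left h1 hD.le
    rw [mul_div_cancel₀ _ hD.ne'] at h2
    linarith
  -- branch formulas
  have hg1 : ∀ t : ℝ, d < t → t ≤ b → gsp m b d t
      = -((m:ℝ)/(2+(m:ℝ))) + DcoefStar m b * t ^ (-1-(m:ℝ)/2) := by
    intro t h1 h2
    unfold gsp
    rw [if_pos ⟨h1, h2⟩, neg_div]
  have hg2 : ∀ t : ℝ, b < t → t ≤ 1 → gsp m b d t
      = (m:ℝ)/(2+(m:ℝ)) - 2*(1+(m:ℝ))/(2+(m:ℝ)) * t ^ (-1-(m:ℝ)/2) := by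
    intro t h1 h2
    unfold gsp
    rw [if_neg (fun hcon => absurd hcon.2 (not_le.mpr h1)), if_pos ⟨h1, h2⟩]
  have hg0 : ∀ t : ℝ, t ≤ d ∨ 1 < t → gsp m b d t = 0 := by
    intro t ht
    unfold gsp
    rcases ht with ht | ht
    · rw [if_neg (fun hcon => absurd hcon.1 (not_lt.mpr ht)),
        if_neg (fun hcon => absurd hcon.1 (not_lt.mpr (by linarith)))]
    · rw [if_neg (fun hcon => absurd hcon.2 (not_le.mpr (by linarith))),
        if_neg (fun hcon => absurd hcon.2 (not_le.mpr ht))]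
  -- global bound for |g|
  have hdrp : (0:ℝ) < d ^ (-1-(m:ℝ)/2) := rpow_pos_of_pos hd0 _
  have hgb : ∀ s : ℝ, |gsp m b d s| ≤ (m:ℝ)/(2+(m:ℝ))
      + (DcoefStar m b + 2*(1+(m:ℝ))/(2+(m:ℝ))) * d ^ (-1-(m:ℝ)/2) := by
    intro s
    unfold gsp
    have hadd : (DcoefStar m b + 2*(1+(m:ℝ))/(2+(m:ℝ))) * d ^ (-1-(m:ℝ)/2)
        = DcoefStar m b * d ^ (-1-(m:ℝ)/2)
          + (2*(1+(m:ℝ))/(2+(m:ℝ))) * d ^ (-1-(m:ℝ)/2) := by ring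
    have hd1 : (0:ℝ) ≤ DcoefStar m b * d ^ (-1-(m:ℝ)/2) := mul_nonneg hD.le hdrp.le
    have hd2 : (0:ℝ) ≤ (2*(1+(m:ℝ))/(2+(m:ℝ))) * d ^ (-1-(m:ℝ)/2) :=
      mul_nonneg hK0.le hdrp.le
    split_ifs with h1 h2
    · have hs0 : 0 < s := lt_trans hd0 h1.1
      have hsd : s ^ (-1-(m:ℝ)/2) ≤ d ^ (-1-(m:ℝ)/2) :=
        rpow_le_rpow_of_nonpos hd0 h1.1.le hβle
      have h0s : (0:ℝ) ≤ s ^ (-1-(m:ℝ)/2) := (rpow_pos_of_pos hs0 _).le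
      have hm1 := mul_le_mul_of_nonneg_left hsd hD.le
      have hm2 := mul_nonneg hD.le h0s
      rw [abs_le, neg_div]
      constructor <;> linarith
    · have hs0 : 0 < s := lt_trans hb0 h2.1
      have hsd : s ^ (-1-(m:ℝ)/2) ≤ d ^ (-1-(m:ℝ)/2) :=
        rpow_le_rpow_of_nonpos hd0 (by linarith [h2.1]) hβle
      have h0s : (0:ℝ) ≤ s ^ (-1-(m:ℝ)/2) := (rpow_pos_of_pos hs0 _).le
      have hm1 := mul_le_mul_of_nonneg_left hsd hK0.le
      have hm2 := mul_nonneg hK0.le h0s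
      rw [abs_le]
      constructor <;> linarith
    · rw [abs_zero]
      linarith
  -- integrability of |g| on bounded intervals
  have hgI : ∀ x y : ℝ, IntegrableOn (fun t => |gsp m b d t|) (Ioc x y) volume :=
    fun x y => bdd_integrableOn (gsp_meas m b d).abs
      (fun s _ => by rw [abs_abs]; exact hgb s)
  have hiI : ∀ x y : ℝ, x ≤ y →
      IntervalIntegrable (fun t => |gsp m b d t|) volume x y :=
    fun x y hxy => (intervalIntegrable_iff_integrableOn_Ioc_of_le hxy).mpr (hgI x y)
  -- reduce integral over Ici 0 to Ioc d 1
  have hIci : (∫ t in Ici (0:ℝ), |gsp m b d t|) = ∫ t in Ioc d 1, |gsp m b d t| := by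
    apply setIntegral_eq_of_subset_of_forall_diff_eq_zero measurableSet_Ici
    · exact fun x hx => le_trans hd0.le hx.1.le
    · intro x hx
      rw [abs_eq_zero]
      apply hg0
      by_cases hxd : x ≤ d
      · exact Or.inl hxd
      · push_neg at hxd
        right
        by_contra h1
        push_neg at h1
        exact hx.2 ⟨hxd, h1⟩
  have hsplit : (∫ t in Ioc d 1, |gsp m b d t|)
      = (∫ t in d..T, |gsp m b d t|) + (∫ t in T..b, |gsp m b d t|)
        + (∫ t in b..1, |gsp m b d t|) := by
    rw [← intervalIntegral.integral_of_le (by linarith : d ≤ (1:ℝ)),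
      ← intervalIntegral.integral_add_adjacent_intervals (hiI d b (by linarith)) (hiI b 1 hb1.le),
      ← intervalIntegral.integral_add_adjacent_intervals (hiI d T hdT.le) (hiI T b hTb.le)]
  -- piece 1 : on (d, T], |g| = -c + D t^β
  have hpiece1 : (∫ t in d..T, |gsp m b d t|)
      = -((m:ℝ)/(2+(m:ℝ))) * (T - d)
        + DcoefStar m b * ((T ^ ((-1-(m:ℝ)/2) + 1) - d ^ ((-1-(m:ℝ)/2) + 1))
            / ((-1-(m:ℝ)/2) + 1)) := by
    rw [intervalIntegral_congr_Ioc hdT.le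
      (g := fun t => -((m:ℝ)/(2+(m:ℝ))) + DcoefStar m b * t ^ (-1-(m:ℝ)/2)) ?_]
    · exact int_affine _ _ _ hd0 hdT.le hβne
    · intro t ht
      show |gsp m b d t| = _
      have htb : t ≤ b := le_trans ht.2 hTb.le
      have ht0 : 0 < t := lt_trans hd0 ht.1
      have h1 : T ^ (-1-(m:ℝ)/2) ≤ t ^ (-1-(m:ℝ)/2) :=
        rpow_le_rpow_of_nonpos ht0 ht.2 hβle
      rw [hTβ] at h1
      have h2 : DcoefStar m b * (((m:ℝ)/(2+(m:ℝ))) / DcoefStar m b)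
          ≤ DcoefStar m b * t ^ (-1-(m:ℝ)/2) := mul_le_mul_of_nonneg_left h1 hD.le
      rw [mul_div_cancel₀ _ hD.ne'] at h2
      rw [hg1 t ht.1 htb, abs_of_nonneg (by linarith)]
  -- piece 2 : on (T, b], |g| = c - D t^β
  have hpiece2 : (∫ t in T..b, |gsp m b d t|)
      = ((m:ℝ)/(2+(m:ℝ))) * (b - T)
        + (-(DcoefStar m b)) * ((b ^ ((-1-(m:ℝ)/2) + 1) - T ^ ((-1-(m:ℝ)/2) + 1))
            / ((-1-(m:ℝ)/2) + 1)) := by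
    rw [intervalIntegral_congr_Ioc hTb.le
      (g := fun t => ((m:ℝ)/(2+(m:ℝ))) + (-(DcoefStar m b)) * t ^ (-1-(m:ℝ)/2)) ?_]
    · exact int_affine _ _ _ hT0 hTb.le hβne
    · intro t ht
      show |gsp m b d t| = _
      have ht0 : 0 < t := lt_trans hT0 ht.1
      have h1 : t ^ (-1-(m:ℝ)/2) ≤ T ^ (-1-(m:ℝ)/2) :=
        rpow_le_rpow_of_nonpos hT0 ht.1.le hβle
      rw [hTβ] at h1
      have h2 : DcoefStar m b * t ^ (-1-(m:ℝ)/2)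
          ≤ DcoefStar m b * (((m:ℝ)/(2+(m:ℝ))) / DcoefStar m b) :=
        mul_le_mul_of_nonneg_left h1 hD.le
      rw [mul_div_cancel₀ _ hD.ne'] at h2
      rw [hg1 t (lt_trans hdT ht.1) ht.2, abs_of_nonpos (by linarith)]
      ring
  -- piece 3 : on (b, 1], |g| = -c + K t^β
  have hpiece3 : (∫ t in b..1, |gsp m b d t|)
      = -((m:ℝ)/(2+(m:ℝ))) * (1 - b)
        + (2*(1+(m:ℝ))/(2+(m:ℝ))) * ((1 ^ ((-1-(m:ℝ)/2) + 1) - b ^ ((-1-(m:ℝ)/2) + 1))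
            / ((-1-(m:ℝ)/2) + 1)) := by
    rw [intervalIntegral_congr_Ioc hb1.le
      (g := fun t => -((m:ℝ)/(2+(m:ℝ))) + (2*(1+(m:ℝ))/(2+(m:ℝ))) * t ^ (-1-(m:ℝ)/2)) ?_]
    · exact int_affine _ _ _ hb0 hb1.le hβne
    · intro t ht
      show |gsp m b d t| = _
      have ht0 : 0 < t := lt_trans hb0 ht.1
      have h1 : 1 ≤ t ^ (-1-(m:ℝ)/2) :=
        Real.one_le_rpow_of_pos_of_le_one_of_nonpos ht0 ht.2 hβle
      have h2 := mul_le_mul_of_nonneg_left h1 hK0.le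
      rw [mul_one] at h2
      have hKc : 2*(1+(m:ℝ))/(2+(m:ℝ)) - (m:ℝ)/(2+(m:ℝ)) = 1 := by
        field_simp
        ring
      rw [hg2 t ht.1 ht.2, abs_of_nonpos (by linarith)]
      ring
  -- exponent rewrites
  have hTw : T ^ ((-1-(m:ℝ)/2) + 1) = (((m:ℝ)/(2+(m:ℝ))) / DcoefStar m b) * T := by
    rw [Real.rpow_add hT0, hTβ, Real.rpow_one]
  have hbw : b ^ ((-1-(m:ℝ)/2) + 1) = b * (b ^ (1+(m:ℝ)/2))⁻¹ := by
    rw [show ((-1-(m:ℝ)/2) + 1 : ℝ) = 1 + (-(1+(m:ℝ)/2)) by ring,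
      Real.rpow_add hb0, Real.rpow_one, Real.rpow_neg hb0.le]
  have hdw : d ^ ((-1-(m:ℝ)/2) + 1) = d ^ (-(m:ℝ)/2) := by
    rw [show ((-1-(m:ℝ)/2) + 1 : ℝ) = -(m:ℝ)/2 by ring]
  -- the denominator equals the L¹ norm
  have key2 : denomStar m b d = ∫ t in Ici (0:ℝ), |gsp m b d t| := by
    have hDne : (2*(1+(m:ℝ))/(2+(m:ℝ))) * (2*b^(1+(m:ℝ)/2)-1) ≠ 0 := by
      rw [← hDval]; exact hD.ne'
    rw [hIci, hsplit, hpiece1, hpiece2, hpiece3, hTw, hbw, hdw, Real.one_rpow,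
      show ((-1-(m:ℝ)/2) + 1 : ℝ) = -((m:ℝ)/2) by ring]
    unfold denomStar
    rw [← hTdef, hDval, show (-(m:ℝ)/2 : ℝ) = -((m:ℝ)/2) by ring]
    exact denom_alg (m:ℝ) T (b ^ (1+(m:ℝ)/2)) (d ^ (-((m:ℝ)/2))) d b hM0 h2M h1M hP0 hBpos
  -- support reduction for the Λ integral
  have hJsupp : ∀ t : ℝ, t ≤ 1 →
      (∫ s in Ioi t, gsp m b d s * s ^ (-1-(m:ℝ)/2))
        = ∫ s in t..1, gsp m b d s * s ^ (-1-(m:ℝ)/2) := by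
    intro t ht1
    rw [intervalIntegral.integral_of_le ht1]
    refine setIntegral_eq_of_subset_of_forall_diff_eq_zero measurableSet_Ioi
      (fun x hx => hx.1) (fun x hx => ?_)
    have hx1 : 1 < x := by
      rcases hx with ⟨hx1, hx2⟩
      by_contra hcon
      push_neg at hcon
      exact hx2 ⟨hx1, hcon⟩
    rw [hg0 x (Or.inr hx1), zero_mul]
  -- interval integrability of the Λ-integrand
  have hiJ : ∀ x y : ℝ, d ≤ x → x ≤ y →
      IntervalIntegrable (fun s => gsp m b d s * s ^ (-1-(m:ℝ)/2)) volume x y := by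
    intro x y hdx hxy
    refine (intervalIntegrable_iff_integrableOn_Ioc_of_le hxy).mpr ?_
    refine bdd_integrableOn ((gsp_meas m b d).mul (by fun_prop))
      (C := ((m:ℝ)/(2+(m:ℝ))
        + (DcoefStar m b + 2*(1+(m:ℝ))/(2+(m:ℝ))) * d ^ (-1-(m:ℝ)/2)) * d ^ (-1-(m:ℝ)/2))
      (fun s hs => ?_)
    have hds : d < s := lt_of_le_of_lt hdx hs.1
    have hs0 : 0 < s := lt_trans hd0 hds
    have hsd : s ^ (-1-(m:ℝ)/2) ≤ d ^ (-1-(m:ℝ)/2) :=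
      rpow_le_rpow_of_nonpos hd0 hds.le hβle
    rw [Pi.mul_apply, abs_mul, abs_of_nonneg (rpow_pos_of_pos hs0 _).le]
    have hC0 : (0:ℝ) ≤ (m:ℝ)/(2+(m:ℝ))
        + (DcoefStar m b + 2*(1+(m:ℝ))/(2+(m:ℝ))) * d ^ (-1-(m:ℝ)/2) :=
      le_trans (abs_nonneg _) (hgb 0)
    exact mul_le_mul (hgb s) hsd (rpow_pos_of_pos hs0 _).le hC0
  -- closed form for ∫_t^b and ∫_b^1 of g(s) s^β
  have hIb1 : (∫ s in b..1, gsp m b d s * s ^ (-1-(m:ℝ)/2))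
      = ((m:ℝ)/(2+(m:ℝ)))
          * ((1 ^ ((-1-(m:ℝ)/2) + 1) - b ^ ((-1-(m:ℝ)/2) + 1)) / ((-1-(m:ℝ)/2) + 1))
        + (-(2*(1+(m:ℝ))/(2+(m:ℝ))))
          * ((1 ^ ((-1-(m:ℝ)/2) + (-1-(m:ℝ)/2) + 1) - b ^ ((-1-(m:ℝ)/2) + (-1-(m:ℝ)/2) + 1))
              / ((-1-(m:ℝ)/2) + (-1-(m:ℝ)/2) + 1)) := by
    rw [intervalIntegral_congr_Ioc hb1.le
      (g := fun s => ((m:ℝ)/(2+(m:ℝ))) * s ^ (-1-(m:ℝ)/2)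
        + (-(2*(1+(m:ℝ))/(2+(m:ℝ)))) * s ^ ((-1-(m:ℝ)/2) + (-1-(m:ℝ)/2))) ?_]
    · exact int_two_rpow _ _ _ _ hb0 hb1.le hβne hβ2ne
    · intro s hs
      show gsp m b d s * s ^ (-1-(m:ℝ)/2) = _
      have hs0 : 0 < s := lt_trans hb0 hs.1
      simp only [hg2 s hs.1 hs.2, Real.rpow_add hs0]
      ring
  have hItb : ∀ t : ℝ, d < t → t ≤ b →
      (∫ s in t..b, gsp m b d s * s ^ (-1-(m:ℝ)/2))
      = (-((m:ℝ)/(2+(m:ℝ))))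
          * ((b ^ ((-1-(m:ℝ)/2) + 1) - t ^ ((-1-(m:ℝ)/2) + 1)) / ((-1-(m:ℝ)/2) + 1))
        + (DcoefStar m b)
          * ((b ^ ((-1-(m:ℝ)/2) + (-1-(m:ℝ)/2) + 1) - t ^ ((-1-(m:ℝ)/2) + (-1-(m:ℝ)/2) + 1))
              / ((-1-(m:ℝ)/2) + (-1-(m:ℝ)/2) + 1)) := by
    intro t hdt htb
    have ht0 : 0 < t := lt_trans hd0 hdt
    rw [intervalIntegral_congr_Ioc htb
      (g := fun s => (-((m:ℝ)/(2+(m:ℝ)))) * s ^ (-1-(m:ℝ)/2)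
        + (DcoefStar m b) * s ^ ((-1-(m:ℝ)/2) + (-1-(m:ℝ)/2))) ?_]
    · exact int_two_rpow _ _ _ _ ht0 htb hβne hβ2ne
    · intro s hs
      show gsp m b d s * s ^ (-1-(m:ℝ)/2) = _
      have hs0 : 0 < s := lt_trans ht0 hs.1
      simp only [hg1 s (lt_trans hdt hs.1) hs.2, Real.rpow_add hs0]
      ring
  -- power rewriting helpers
  have e1 : ∀ u : ℝ, 0 < u → u ^ ((-1-(m:ℝ)/2) + 1) = u * u ^ (-1-(m:ℝ)/2) := by
    intro u hu
    rw [Real.rpow_add hu, Real.rpow_one]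
    ring
  have e2 : ∀ u : ℝ, 0 < u → u ^ ((-1-(m:ℝ)/2) + (-1-(m:ℝ)/2) + 1)
      = u * u ^ (-1-(m:ℝ)/2) * u ^ (-1-(m:ℝ)/2) := by
    intro u hu
    rw [show ((-1-(m:ℝ)/2) + (-1-(m:ℝ)/2) + 1 : ℝ)
        = (1:ℝ) + ((-1-(m:ℝ)/2) + (-1-(m:ℝ)/2)) by ring,
      Real.rpow_add hu, Real.rpow_add hu, Real.rpow_one]
    ring
  have hXY : ∀ u : ℝ, 0 < u → u ^ ((m:ℝ)/2) * (u * u ^ (-1-(m:ℝ)/2)) = 1 := by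
    intro u hu
    rw [show u * u ^ (-1-(m:ℝ)/2) = u ^ ((1:ℝ) + (-1-(m:ℝ)/2)) by
        rw [Real.rpow_add hu, Real.rpow_one],
      ← Real.rpow_add hu, show ((m:ℝ)/2 + ((1:ℝ) + (-1-(m:ℝ)/2)) : ℝ) = 0 by ring,
      Real.rpow_zero]
  have hPYb : b ^ (1+(m:ℝ)/2) * b ^ (-1-(m:ℝ)/2) = 1 := by
    rw [← Real.rpow_add hb0, show ((1+(m:ℝ)/2) + (-1-(m:ℝ)/2) : ℝ) = 0 by ring,
      Real.rpow_zero]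
  -- Λ g = 1 on (b, 1]
  have hΛ2 : ∀ t : ℝ, b < t → t ≤ 1 → LamStar m (gsp m b d) t = 1 := by
    intro t hbt ht1
    have ht0 : 0 < t := lt_trans hb0 hbt
    unfold LamStar
    rw [hJsupp t ht1]
    rw [intervalIntegral_congr_Ioc ht1
      (g := fun s => ((m:ℝ)/(2+(m:ℝ))) * s ^ (-1-(m:ℝ)/2)
        + (-(2*(1+(m:ℝ))/(2+(m:ℝ)))) * s ^ ((-1-(m:ℝ)/2) + (-1-(m:ℝ)/2))) ?_]
    · rw [int_two_rpow _ _ _ _ ht0 ht1 hβne hβ2ne, hg2 t hbt ht1, Real.one_rpow,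
        Real.one_rpow, e1 t ht0, e2 t ht0]
      exact lam_alg2 (m:ℝ) (t ^ ((m:ℝ)/2)) (t ^ (-1-(m:ℝ)/2)) t hM0 h1M h2M (hXY t ht0)
    · intro s hs
      show gsp m b d s * s ^ (-1-(m:ℝ)/2) = _
      have hs0 : 0 < s := lt_trans ht0 hs.1
      simp only [hg2 s (lt_trans hbt hs.1) hs.2, Real.rpow_add hs0]
      ring
  -- Λ g = -1 on (d, b]
  have hΛ1 : ∀ t : ℝ, d < t → t ≤ b → LamStar m (gsp m b d) t = -1 := by
    intro t hdt htb
    have ht0 : 0 < t := lt_trans hd0 hdt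
    have ht1 : t ≤ 1 := le_trans htb hb1.le
    unfold LamStar
    rw [hJsupp t ht1,
      ← intervalIntegral.integral_add_adjacent_intervals
        (hiJ t b hdt.le htb) (hiJ b 1 (by linarith) hb1.le),
      hItb t hdt htb, hIb1, hg1 t hdt htb, Real.one_rpow, Real.one_rpow,
      e1 t ht0, e2 t ht0, e1 b hb0, e2 b hb0, hDval]
    exact lam_alg1 (m:ℝ) (t ^ ((m:ℝ)/2)) (t ^ (-1-(m:ℝ)/2)) t b (b ^ (-1-(m:ℝ)/2))
      (b ^ (1+(m:ℝ)/2)) hM0 h1M h2M (hXY t ht0) hPYb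
  -- the superlevel set contains (d, 1]
  have hsub : Ioc d 1 ⊆ {t : ℝ | 0 ≤ t ∧ 1 ≤ |LamStar m (gsp m b d) t|} := by
    intro t ht
    refine ⟨le_trans hd0.le ht.1.le, ?_⟩
    rcases le_or_gt t b with hc | hc
    · rw [hΛ1 t ht.1 hc, abs_neg, abs_one]
    · rw [hΛ2 t hc ht.2, abs_one]
  have key3 : ENNReal.ofReal (1 - d)
      ≤ volume {t : ℝ | 0 ≤ t ∧ 1 ≤ |LamStar m (gsp m b d) t|} := by
    calc ENNReal.ofReal (1 - d) = volume (Ioc d 1) := (Real.volume_Ioc).symm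
      _ ≤ _ := measure_mono hsub
  -- positivity of the denominator
  have hpos : 0 < denomStar m b d := by
    have h1 : 0 ≤ ∫ t in d..T, |gsp m b d t| :=
      intervalIntegral.integral_nonneg hdT.le (fun x _ => abs_nonneg _)
    have h2 : 0 ≤ ∫ t in T..b, |gsp m b d t| :=
      intervalIntegral.integral_nonneg hTb.le (fun x _ => abs_nonneg _)
    have h3 : 1 - b ≤ ∫ t in b..1, |gsp m b d t| := by
      rw [intervalIntegral.integral_of_le hb1.le]
      have e1 : (1:ℝ) - b = ∫ t in Ioc b 1, (1:ℝ) := by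
        rw [setIntegral_const, measureReal_def, Real.volume_Ioc, ENNReal.toReal_ofReal (by linarith),
          smul_eq_mul, mul_one]
      rw [e1]
      refine setIntegral_mono_on
        (integrableOn_const measure_Ioc_lt_top.ne) (hgI b 1)
        measurableSet_Ioc (fun x hx => ?_)
      have hx0 : 0 < x := lt_trans hb0 hx.1
      have h1x : 1 ≤ x ^ (-1-(m:ℝ)/2) :=
        Real.one_le_rpow_of_pos_of_le_one_of_nonpos hx0 hx.2 hβle
      have h2x := mul_le_mul_of_nonneg_left h1x hK0.le
      rw [mul_one] at h2x
      have hKc : 2*(1+(m:ℝ))/(2+(m:ℝ)) - (m:ℝ)/(2+(m:ℝ)) = 1 := by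
        field_simp
        ring
      rw [hg2 x hx.1 hx.2, abs_of_nonpos (by linarith)]
      linarith
    rw [key2, hIci, hsplit]
    linarith
  refine ⟨hpos, key2, key3, ?_⟩
  have hWf : WfStar m b d * ∫ t in Ici (0:ℝ), |gsp m b d t| = 1 - d := by
    rw [← key2]
    unfold WfStar
    rw [div_mul_cancel₀ _ (ne_of_gt hpos)]
  rw [hWf]
  exact key3
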